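/- For all n and k: Q_{n,k}(δx, Δx, δu) = ½ ( [1, δxᵀ, δuᵀ] Γ_{n,k} [1; δx; δu] + Ω_{n,k} Δx ) and V_{n,k}(δx, Δx) = ½ ( [1, δxᵀ] S_{n,k} [1; δx] + Ω_{n,k} Δx ), where Γ_{n,k}, S_{n,k} and Ω_{n,k} are the matrices produced by the Newton backward recursion at ū; moreover, for each fixed (δx, Δx), the input δu = K_k δx + s_k is the unique joint stationary point of the maps δu_n ↦ Q_{n,k}(δx, Δx, δu). -/

import Mathlib

open Matrix BigOperators Filter

noncomputable section

namespace DynGame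

/-- joint input coordinate index: player `n`, coordinate `i < m n` -/
abbrev UIdx (N : ℕ) (m : Fin N → ℕ) := (n : Fin N) × Fin (m n)
/-- state vector -/
abbrev Stt (nx : ℕ) := Fin nx → ℝ
/-- joint input vector -/
abbrev Inp (N : ℕ) (m : Fin N → ℕ) := UIdx N m → ℝ
/-- input sequence over times 0,…,T -/
abbrev Seq (T N : ℕ) (m : Fin N → ℕ) := Fin (T+1) → Inp N m
/-- joint (state, input) index, of size nx + nu -/
abbrev ZIdx (nx N : ℕ) (m : Fin N → ℕ) := Fin nx ⊕ UIdx N m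
/-- extended index of size 1 + nx + nu -/
abbrev Ix (nx N : ℕ) (m : Fin N → ℕ) := Unit ⊕ ZIdx nx N m
/-- extended state index of size 1 + nx -/
abbrev Jx (nx : ℕ) := Unit ⊕ Fin nx

/-- problem data: dynamics, stage costs, initial state -/
structure Setup (T nx N : ℕ) (m : Fin N → ℕ) where
  f : ℕ → Stt nx → Inp N m → Stt nx
  c : Fin N → ℕ → Stt nx → Inp N m → ℝ
  x0 : Stt nx

variable {T nx N : ℕ} {m : Fin N → ℕ}

/-- extend an input sequence to all of ℕ (by zero beyond T) -/
def extSeq (u : Seq T N m) : ℕ → Inp N m := fun k => if h : k < T + 1 then u ⟨k, h⟩ else 0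

/-- trajectory generated by input sequence `u` -/
def traj (P : Setup T nx N m) (u : Seq T N m) : ℕ → Stt nx
  | 0 => P.x0
  | k + 1 => P.f k (traj P u k) (extSeq u k)

/-- player `n`'s total cost -/
def J (P : Setup T nx N m) (n : Fin N) (u : Seq T N m) : ℝ :=
  ∑ k ∈ Finset.range (T + 1), P.c n k (traj P u k) (extSeq u k)

/-- stacked vector of the partial gradients ∂Jₙ/∂u_{n,:} -/
def calJ (P : Setup T nx N m) (u : Seq T N m) : Seq T N m :=
  fun k p => fderiv ℝ (J P p.1) u (Pi.single k (Pi.single p 1))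

/-- dynamics as a function of the joint (state,input) pair -/
def fpair (P : Setup T nx N m) (k : ℕ) : Stt nx × Inp N m → Stt nx := fun z => P.f k z.1 z.2

/-- cost as a function of the joint (state,input) pair -/
def cpair (P : Setup T nx N m) (n : Fin N) (k : ℕ) : Stt nx × Inp N m → ℝ := fun z => P.c n k z.1 z.2

/-- nominal (state,input) pair at time k -/
def zbar (P : Setup T nx N m) (ub : Seq T N m) (k : ℕ) : Stt nx × Inp N m :=
  (traj P ub k, extSeq ub k)

/-- coordinate basis vector of the joint (state,input) space -/
def zbasis (w : ZIdx nx N m) : Stt nx × Inp N m :=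
  Sum.elim (fun i => (Pi.single i 1, 0)) (fun p => ((0 : Stt nx), Pi.single p 1)) w

/-- A_k = ∂f_k/∂x(x̄_k, ū_k) -/
def Amat (P : Setup T nx N m) (ub : Seq T N m) (k : ℕ) : Matrix (Fin nx) (Fin nx) ℝ :=
  fun i j => fderiv ℝ (fun x => P.f k x (extSeq ub k) i) (traj P ub k) (Pi.single j 1)

/-- B_k = ∂f_k/∂u(x̄_k, ū_k) -/
def Bmat (P : Setup T nx N m) (ub : Seq T N m) (k : ℕ) : Matrix (Fin nx) (UIdx N m) ℝ :=
  fun i p => fderiv ℝ (fun v => P.f k (traj P ub k) v i) (extSeq ub k) (Pi.single p 1)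

/-- G_k^l : Hessian of the l-th component of f_k w.r.t. the joint variable (x,u) -/
def Gmat (P : Setup T nx N m) (ub : Seq T N m) (k : ℕ) (l : Fin nx) :
    Matrix (ZIdx nx N m) (ZIdx nx N m) ℝ :=
  fun a b =>
    fderiv ℝ (fun z => fderiv ℝ (fun w => fpair P k w l) z (zbasis a)) (zbar P ub k) (zbasis b)

/-- M_{n,k}^{1x} = ∂c_{n,k}/∂x (row vector) -/
def M1x (P : Setup T nx N m) (ub : Seq T N m) (n : Fin N) (k : ℕ) : Fin nx → ℝ :=
  fun j => fderiv ℝ (cpair P n k) (zbar P ub k) (zbasis (Sum.inl j))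

/-- M_{n,k}^{1u} = ∂c_{n,k}/∂u (row vector) -/
def M1u (P : Setup T nx N m) (ub : Seq T N m) (n : Fin N) (k : ℕ) : UIdx N m → ℝ :=
  fun p => fderiv ℝ (cpair P n k) (zbar P ub k) (zbasis (Sum.inr p))

/-- Hessian blocks of c_{n,k} w.r.t. the joint variable (x,u) -/
def M2 (P : Setup T nx N m) (ub : Seq T N m) (n : Fin N) (k : ℕ) :
    Matrix (ZIdx nx N m) (ZIdx nx N m) ℝ :=
  fun w w' =>
    fderiv ℝ (fun z => fderiv ℝ (cpair P n k) z (zbasis w)) (zbar P ub k) (zbasis w')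

/-- the matrix M_{n,k} of the paper -/
def Mmat (P : Setup T nx N m) (ub : Seq T N m) (n : Fin N) (k : ℕ) :
    Matrix (Ix nx N m) (Ix nx N m) ℝ :=
  fun a b =>
    match a, b with
    | Sum.inl _, Sum.inl _ => 2 * P.c n k (traj P ub k) (extSeq ub k)
    | Sum.inl _, Sum.inr w => Sum.elim (M1x P ub n k) (M1u P ub n k) w
    | Sum.inr w, Sum.inl _ => Sum.elim (M1x P ub n k) (M1u P ub n k) w
    | Sum.inr w, Sum.inr w' => M2 P ub n k w w'

/-- vector [1; δx; δu] -/
def vec1 (δx : Stt nx) (δu : Inp N m) : Ix nx N m → ℝ :=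
  Sum.elim (fun _ => (1 : ℝ)) (Sum.elim δx δu)

/-- vector [1; δx] -/
def vecj (δx : Stt nx) : Jx nx → ℝ := Sum.elim (fun _ => (1 : ℝ)) δx

/-- the matrix F formed by stacking the rows Γ_n^{uₙ u} -/
def Fof (Γ : Fin N → Matrix (Ix nx N m) (Ix nx N m) ℝ) : Matrix (UIdx N m) (UIdx N m) ℝ :=
  fun p q => Γ p.1 (Sum.inr (Sum.inr p)) (Sum.inr (Sum.inr q))

/-- the matrix P formed by stacking the blocks Γ_n^{uₙ x} -/
def Pof (Γ : Fin N → Matrix (Ix nx N m) (Ix nx N m) ℝ) : Matrix (UIdx N m) (Fin nx) ℝ :=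
  fun p j => Γ p.1 (Sum.inr (Sum.inr p)) (Sum.inr (Sum.inl j))

/-- the vector H formed by stacking the blocks Γ_n^{uₙ 1} -/
def Hof (Γ : Fin N → Matrix (Ix nx N m) (Ix nx N m) ℝ) : Inp N m :=
  fun p => Γ p.1 (Sum.inr (Sum.inr p)) (Sum.inl ())

/-- s = −F⁻¹ H -/
def sof (Γ : Fin N → Matrix (Ix nx N m) (Ix nx N m) ℝ) : Inp N m :=
  -((Fof Γ)⁻¹ *ᵥ Hof Γ)

/-- K = −F⁻¹ P -/
def Kof (Γ : Fin N → Matrix (Ix nx N m) (Ix nx N m) ℝ) : Matrix (UIdx N m) (Fin nx) ℝ :=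
  -((Fof Γ)⁻¹ * Pof Γ)

/-- the matrix [[1,0,0],[0,A,B]] -/
def Cmat (A : Matrix (Fin nx) (Fin nx) ℝ) (B : Matrix (Fin nx) (UIdx N m) ℝ) :
    Matrix (Jx nx) (Ix nx N m) ℝ :=
  fun a b =>
    match a, b with
    | Sum.inl _, Sum.inl _ => 1
    | Sum.inl _, Sum.inr _ => 0
    | Sum.inr _, Sum.inl _ => 0
    | Sum.inr i, Sum.inr (Sum.inl j) => A i j
    | Sum.inr i, Sum.inr (Sum.inr p) => B i p

/-- extend an (x,u)-square matrix by zeros to the 1+(x,u) index set -/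
def Dext (D : Matrix (ZIdx nx N m) (ZIdx nx N m) ℝ) : Matrix (Ix nx N m) (Ix nx N m) ℝ :=
  fun a b =>
    match a, b with
    | Sum.inr w, Sum.inr w' => D w w'
    | _, _ => 0

/-- the matrix [[1,0],[0,I],[s,K]] -/
def Emat (s : Inp N m) (K : Matrix (UIdx N m) (Fin nx) ℝ) : Matrix (Ix nx N m) (Jx nx) ℝ :=
  fun a b =>
    match a, b with
    | Sum.inl _, Sum.inl _ => 1
    | Sum.inl _, Sum.inr _ => 0
    | Sum.inr (Sum.inl _), Sum.inl _ => 0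
    | Sum.inr (Sum.inl i), Sum.inr j => if i = j then 1 else 0
    | Sum.inr (Sum.inr p), Sum.inl _ => s p
    | Sum.inr (Sum.inr p), Sum.inr j => K p j

/-- Γ_n = M_n + Cᵀ S_n C + Dext(D_n), the common backpropagation step of both recursions -/
def gammaFam (P : Setup T nx N m) (ub : Seq T N m)
    (S : Fin N → Matrix (Jx nx) (Jx nx) ℝ) (k : ℕ)
    (D : Fin N → Matrix (ZIdx nx N m) (ZIdx nx N m) ℝ) :
    Fin N → Matrix (Ix nx N m) (Ix nx N m) ℝ :=
  fun n =>
    Mmat P ub n k + (Cmat (Amat P ub k) (Bmat P ub k))ᵀ * S n * Cmat (Amat P ub k) (Bmat P ub k)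
      + Dext (D n)

/-- S_n = Eᵀ Γ_n E : substitution of the equilibrium affine policy -/
def subPolicy (Γ : Fin N → Matrix (Ix nx N m) (Ix nx N m) ℝ) :
    Fin N → Matrix (Jx nx) (Jx nx) ℝ :=
  fun n => (Emat (sof Γ) (Kof Γ))ᵀ * Γ n * Emat (sof Γ) (Kof Γ)

/-- Ω recursion, indexed by number of steps from the end: `omegaAux j = Ω_{·,T+1-j}` -/
def omegaAux (P : Setup T nx N m) (ub : Seq T N m) (n : Fin N) : ℕ → (Fin nx → ℝ)
  | 0 => 0
  | j + 1 => M1x P ub n (T - j) + omegaAux P ub n j ᵥ* Amat P ub (T - j)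

/-- Ω_{n,k} of the Newton backward recursion -/
def Omega (P : Setup T nx N m) (ub : Seq T N m) (n : Fin N) (k : ℕ) : Fin nx → ℝ :=
  omegaAux P ub n (T + 1 - k)

/-- Newton backward recursion for S, indexed by steps from the end: `newtSAux j = S_{·,T+1-j}` -/
def newtSAux (P : Setup T nx N m) (ub : Seq T N m) : ℕ → Fin N → Matrix (Jx nx) (Jx nx) ℝ
  | 0 => fun _ => 0
  | j + 1 =>
    subPolicy (gammaFam P ub (newtSAux P ub j) (T - j)
      (fun n => ∑ l, omegaAux P ub n j l • Gmat P ub (T - j) l))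

/-- D_{n,k} of the Newton backward recursion -/
def newtD (P : Setup T nx N m) (ub : Seq T N m) (k : ℕ) :
    Fin N → Matrix (ZIdx nx N m) (ZIdx nx N m) ℝ :=
  fun n => ∑ l, Omega P ub n (k + 1) l • Gmat P ub k l

/-- Γ_{n,k} of the Newton backward recursion -/
def newtGamma (P : Setup T nx N m) (ub : Seq T N m) (k : ℕ) :
    Fin N → Matrix (Ix nx N m) (Ix nx N m) ℝ :=
  gammaFam P ub (newtSAux P ub (T - k)) k (newtD P ub k)

/-- S_{n,k} of the Newton backward recursion -/
def newtSmat (P : Setup T nx N m) (ub : Seq T N m) (k : ℕ) :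
    Fin N → Matrix (Jx nx) (Jx nx) ℝ :=
  newtSAux P ub (T + 1 - k)

def newtF (P : Setup T nx N m) (ub : Seq T N m) (k : ℕ) : Matrix (UIdx N m) (UIdx N m) ℝ :=
  Fof (newtGamma P ub k)
def newtP (P : Setup T nx N m) (ub : Seq T N m) (k : ℕ) : Matrix (UIdx N m) (Fin nx) ℝ :=
  Pof (newtGamma P ub k)
def newtH (P : Setup T nx N m) (ub : Seq T N m) (k : ℕ) : Inp N m :=
  Hof (newtGamma P ub k)
def newts (P : Setup T nx N m) (ub : Seq T N m) (k : ℕ) : Inp N m :=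
  sof (newtGamma P ub k)
def newtK (P : Setup T nx N m) (ub : Seq T N m) (k : ℕ) : Matrix (UIdx N m) (Fin nx) ℝ :=
  Kof (newtGamma P ub k)

/-- DDP backward recursion for S̃, indexed by steps from the end: `ddpSAux j = S̃_{·,T+1-j}` -/
def ddpSAux (P : Setup T nx N m) (ub : Seq T N m) : ℕ → Fin N → Matrix (Jx nx) (Jx nx) ℝ
  | 0 => fun _ => 0
  | j + 1 =>
    subPolicy (gammaFam P ub (ddpSAux P ub j) (T - j)
      (fun n => ∑ l, (ddpSAux P ub j n) (Sum.inl ()) (Sum.inr l) • Gmat P ub (T - j) l))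

/-- D̃_{n,k} of the DDP backward recursion -/
def ddpD (P : Setup T nx N m) (ub : Seq T N m) (k : ℕ) :
    Fin N → Matrix (ZIdx nx N m) (ZIdx nx N m) ℝ :=
  fun n => ∑ l, (ddpSAux P ub (T - k) n) (Sum.inl ()) (Sum.inr l) • Gmat P ub k l

/-- Γ̃_{n,k} of the DDP backward recursion -/
def ddpGamma (P : Setup T nx N m) (ub : Seq T N m) (k : ℕ) :
    Fin N → Matrix (Ix nx N m) (Ix nx N m) ℝ :=
  gammaFam P ub (ddpSAux P ub (T - k)) k (ddpD P ub k)

/-- S̃_{n,k} of the DDP backward recursion -/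
def ddpSmat (P : Setup T nx N m) (ub : Seq T N m) (k : ℕ) :
    Fin N → Matrix (Jx nx) (Jx nx) ℝ :=
  ddpSAux P ub (T + 1 - k)

def ddpF (P : Setup T nx N m) (ub : Seq T N m) (k : ℕ) : Matrix (UIdx N m) (UIdx N m) ℝ :=
  Fof (ddpGamma P ub k)
def ddpPmat (P : Setup T nx N m) (ub : Seq T N m) (k : ℕ) : Matrix (UIdx N m) (Fin nx) ℝ :=
  Pof (ddpGamma P ub k)
def ddpH (P : Setup T nx N m) (ub : Seq T N m) (k : ℕ) : Inp N m :=
  Hof (ddpGamma P ub k)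
def ddps (P : Setup T nx N m) (ub : Seq T N m) (k : ℕ) : Inp N m :=
  sof (ddpGamma P ub k)
def ddpK (P : Setup T nx N m) (ub : Seq T N m) (k : ℕ) : Matrix (UIdx N m) (Fin nx) ℝ :=
  Kof (ddpGamma P ub k)

/-- Newton forward pass: states δx_k -/
def newtDx (P : Setup T nx N m) (ub : Seq T N m) : ℕ → Stt nx
  | 0 => 0
  | k + 1 =>
    Amat P ub k *ᵥ newtDx P ub k
      + Bmat P ub k *ᵥ (newtK P ub k *ᵥ newtDx P ub k + newts P ub k)

/-- Newton forward pass: inputs δu_k = K_k δx_k + s_k -/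
def newtDu (P : Setup T nx N m) (ub : Seq T N m) (k : ℕ) : Inp N m :=
  newtK P ub k *ᵥ newtDx P ub k + newts P ub k

/-- DDP forward pass: states x_k^D -/
def ddpX (P : Setup T nx N m) (ub : Seq T N m) : ℕ → Stt nx
  | 0 => P.x0
  | k + 1 =>
    P.f k (ddpX P ub k)
      (extSeq ub k + (ddpK P ub k *ᵥ (ddpX P ub k - traj P ub k) + ddps P ub k))

/-- DDP forward pass: δx_k^D = x_k^D − x̄_k -/
def ddpDx (P : Setup T nx N m) (ub : Seq T N m) (k : ℕ) : Stt nx :=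
  ddpX P ub k - traj P ub k

/-- DDP forward pass: δu_k^D = K̃_k δx_k^D + s̃_k -/
def ddpDu (P : Setup T nx N m) (ub : Seq T N m) (k : ℕ) : Inp N m :=
  ddpK P ub k *ᵥ ddpDx P ub k + ddps P ub k

/-- one full DDP iteration on input sequences -/
def ddpStep (P : Setup T nx N m) (ub : Seq T N m) : Seq T N m :=
  fun t => ub t + ddpDu P ub (t : ℕ)

/-- first-order sensitivity of the state x_k w.r.t. the input sequence, along δu -/
def dx1 (P : Setup T nx N m) (ub δu : Seq T N m) (k : ℕ) : Stt nx :=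
  fun i => fderiv ℝ (fun u => traj P u k i) ub δu

/-- second-order sensitivity of the state x_k w.r.t. the input sequence, along (δu,δu) -/
def dx2 (P : Setup T nx N m) (ub δu : Seq T N m) (k : ℕ) : Stt nx :=
  fun l => fderiv ℝ (fun u => fderiv ℝ (fun u' => traj P u' k l) u δu) ub δu

/-- recursively defined first-order state perturbation δx_k -/
def dxRec (P : Setup T nx N m) (ub δu : Seq T N m) : ℕ → Stt nx
  | 0 => 0
  | k + 1 => Amat P ub k *ᵥ dxRec P ub δu k + Bmat P ub k *ᵥ extSeq δu k

/-- the quadratic vector R_k(δx, δu), with l-th entry [δx;δu]ᵀ G_k^l [δx;δu] -/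
def Rquad (P : Setup T nx N m) (ub : Seq T N m) (k : ℕ) (δx : Stt nx) (δu : Inp N m) :
    Stt nx :=
  fun l => Sum.elim δx δu ⬝ᵥ (Gmat P ub k l *ᵥ Sum.elim δx δu)

/-- recursively defined second-order state perturbation Δx_k -/
def DxRec (P : Setup T nx N m) (ub δu : Seq T N m) : ℕ → Stt nx
  | 0 => 0
  | k + 1 =>
    Amat P ub k *ᵥ DxRec P ub δu k + Rquad P ub k (dxRec P ub δu k) (extSeq δu k)

/-- partial Jacobian ∂x_k/∂u_i at ū -/
def Xjac (P : Setup T nx N m) (ub : Seq T N m) (k : ℕ) (i : Fin (T+1)) :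
    Matrix (Fin nx) (UIdx N m) ℝ :=
  fun l a => fderiv ℝ (fun u => traj P u k l) ub (Pi.single i (Pi.single a 1))

/-- mixed second partial derivatives ∂²x_k^l/∂u_i∂u_j at ū -/
def Xhess (P : Setup T nx N m) (ub : Seq T N m) (k : ℕ) (l : Fin nx) (i j : Fin (T+1)) :
    Matrix (UIdx N m) (UIdx N m) ℝ :=
  fun a b =>
    fderiv ℝ (fun u => fderiv ℝ (fun u' => traj P u' k l) u (Pi.single i (Pi.single a 1))) ub
      (Pi.single j (Pi.single b 1))

/-- restarted trajectory: state at time k+j when restarting from ξ at time k with nominal inputs -/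
def trajFrom (P : Setup T nx N m) (ub : Seq T N m) (k : ℕ) (ξ : Stt nx) : ℕ → Stt nx
  | 0 => ξ
  | j + 1 => P.f (k + j) (trajFrom P ub k ξ j) (extSeq ub (k + j))

/-- player n's cost-to-go from time k as a function of the time-k state -/
def cost2go (P : Setup T nx N m) (ub : Seq T N m) (n : Fin N) (k : ℕ) (ξ : Stt nx) : ℝ :=
  ∑ j ∈ Finset.range (T + 1 - k), P.c n (k + j) (trajFrom P ub k ξ j) (extSeq ub (k + j))

/-- second-order Taylor polynomial of g at z0, evaluated at z -/
def taylor2 {E : Type*} [NormedAddCommGroup E] [NormedSpace ℝ E] (g : E → ℝ) (z0 z : E) : ℝ :=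
  g z0 + fderiv ℝ g z0 (z - z0)
    + (1 / 2) * fderiv ℝ (fun w => fderiv ℝ g w (z - z0)) z0 (z - z0)

/-- DDP approximate value functions, indexed by steps from the end: `ddpVAux j = Ṽ_{·,T+1-j}` -/
def ddpVAux (P : Setup T nx N m) (ub : Seq T N m) : ℕ → Fin N → Stt nx → ℝ
  | 0 => fun _ _ => 0
  | j + 1 => fun n x =>
    taylor2 (fun z : Stt nx × Inp N m => cpair P n (T - j) z + ddpVAux P ub j n (fpair P (T - j) z))
      (zbar P ub (T - j))
      (x, extSeq ub (T - j)
        + (ddpK P ub (T - j) *ᵥ (x - traj P ub (T - j)) + ddps P ub (T - j)))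

/-- DDP approximate state-action value function Q̃_{n,k} -/
def ddpQ (P : Setup T nx N m) (ub : Seq T N m) (k : ℕ) (n : Fin N)
    (x : Stt nx) (u : Inp N m) : ℝ :=
  taylor2 (fun z : Stt nx × Inp N m => cpair P n k z + ddpVAux P ub (T - k) n (fpair P k z))
    (zbar P ub k) (x, u)

/-- DDP approximate value function Ṽ_{n,k} -/
def ddpV (P : Setup T nx N m) (ub : Seq T N m) (k : ℕ) (n : Fin N) (x : Stt nx) : ℝ :=
  ddpVAux P ub (T + 1 - k) n x

/-- Newton-game value functions, indexed by steps from the end: `newtVAux j = V_{·,T+1-j}` -/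
def newtVAux (P : Setup T nx N m) (ub : Seq T N m) : ℕ → Fin N → Stt nx → Stt nx → ℝ
  | 0 => fun _ _ _ => 0
  | j + 1 => fun n δx Δx =>
    (1 / 2) * (vec1 δx (newtK P ub (T - j) *ᵥ δx + newts P ub (T - j)) ⬝ᵥ
        (Mmat P ub n (T - j) *ᵥ vec1 δx (newtK P ub (T - j) *ᵥ δx + newts P ub (T - j)))
      + M1x P ub n (T - j) ⬝ᵥ Δx)
    + newtVAux P ub j n
        (Amat P ub (T - j) *ᵥ δx
          + Bmat P ub (T - j) *ᵥ (newtK P ub (T - j) *ᵥ δx + newts P ub (T - j)))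
        (Amat P ub (T - j) *ᵥ Δx
          + Rquad P ub (T - j) δx (newtK P ub (T - j) *ᵥ δx + newts P ub (T - j)))

/-- Newton-game state-action value function Q_{n,k} -/
def newtQ (P : Setup T nx N m) (ub : Seq T N m) (k : ℕ) (n : Fin N)
    (δx Δx : Stt nx) (δu : Inp N m) : ℝ :=
  (1 / 2) * (vec1 δx δu ⬝ᵥ (Mmat P ub n k *ᵥ vec1 δx δu) + M1x P ub n k ⬝ᵥ Δx)
    + newtVAux P ub (T - k) n (Amat P ub k *ᵥ δx + Bmat P ub k *ᵥ δu)
        (Amat P ub k *ᵥ Δx + Rquad P ub k δx δu)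

/-- Newton-game value function V_{n,k} -/
def newtV (P : Setup T nx N m) (ub : Seq T N m) (k : ℕ) (n : Fin N) (δx Δx : Stt nx) : ℝ :=
  newtVAux P ub (T + 1 - k) n δx Δx

/-- replace player n's inputs in u* by w, keeping the others fixed -/
def combineInput (ustar : Seq T N m) (n : Fin N) (w : Fin (T+1) → Fin (m n) → ℝ) :
    Seq T N m :=
  fun k p => if h : p.1 = n then w k (Fin.cast (congrArg m h) p.2) else ustar k p


section Aux11

variable {T nx N : ℕ} {m : Fin N → ℕ}

lemma sndSymm {E : Type*} [NormedAddCommGroup E] [NormedSpace ℝ E] {g : E → ℝ}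
    (hg : ContDiff ℝ 2 g) (x v w : E) :
    fderiv ℝ (fun z => fderiv ℝ g z v) x w = fderiv ℝ (fun z => fderiv ℝ g z w) x v := by
  have hd : DifferentiableAt ℝ (fderiv ℝ g) x :=
    ((hg.fderiv_right (m := 1) (by norm_num)).differentiable one_ne_zero).differentiableAt
  have h1 : ∀ a : E, fderiv ℝ (fun z => fderiv ℝ g z a) x
      = (fderiv ℝ (fderiv ℝ g) x).flip a := by
    intro a
    rw [show (fun z => fderiv ℝ g z a) = fun z => (fderiv ℝ g z) ((fun _ => a) z) from rfl,
      fderiv_clm_apply hd (differentiableAt_const a)]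
    simp
  rw [h1 v, h1 w]
  exact (hg.contDiffAt.isSymmSndFDerivAt (by norm_num)) w v

lemma cmat_mulVec (A : Matrix (Fin nx) (Fin nx) ℝ) (B : Matrix (Fin nx) (UIdx N m) ℝ)
    (δx : Stt nx) (δu : Inp N m) :
    Cmat A B *ᵥ vec1 δx δu = vecj (A *ᵥ δx + B *ᵥ δu) := by
  funext a
  cases a with
  | inl u => simp [Cmat, vec1, vecj, Matrix.mulVec, dotProduct, Fintype.sum_sum_type]
  | inr i => simp [Cmat, vec1, vecj, Matrix.mulVec, dotProduct, Fintype.sum_sum_type]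

lemma emat_mulVec (s : Inp N m) (K : Matrix (UIdx N m) (Fin nx) ℝ) (δx : Stt nx) :
    Emat s K *ᵥ vecj δx = vec1 δx (K *ᵥ δx + s) := by
  funext a
  rcases a with u | (i | p)
  · simp [Emat, vec1, vecj, Matrix.mulVec, dotProduct, Fintype.sum_sum_type]
  · simp [Emat, vec1, vecj, Matrix.mulVec, dotProduct, Fintype.sum_sum_type, ite_mul]
  · simp [Emat, vec1, vecj, Matrix.mulVec, dotProduct, Fintype.sum_sum_type, add_comm]

lemma quad_conj {I J : Type*} [Fintype I] [Fintype J] [DecidableEq I] [DecidableEq J]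
    (Mx : Matrix J I ℝ) (S : Matrix J J ℝ) (v : I → ℝ) :
    v ⬝ᵥ ((Mxᵀ * S * Mx) *ᵥ v) = (Mx *ᵥ v) ⬝ᵥ (S *ᵥ (Mx *ᵥ v)) := by
  rw [Matrix.mul_assoc, ← Matrix.mulVec_mulVec, Matrix.dotProduct_mulVec,
    Matrix.vecMul_transpose, ← Matrix.mulVec_mulVec]

lemma dext_quad (D : Matrix (ZIdx nx N m) (ZIdx nx N m) ℝ) (δx : Stt nx) (δu : Inp N m) :
    vec1 δx δu ⬝ᵥ (Dext D *ᵥ vec1 δx δu) = Sum.elim δx δu ⬝ᵥ (D *ᵥ Sum.elim δx δu) := by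
  simp [dotProduct, Matrix.mulVec, Fintype.sum_sum_type, Dext, vec1]

lemma sum_smul_quad {I L : Type*} [Fintype I] [Fintype L] (ω : L → ℝ) (G : L → Matrix I I ℝ)
    (z : I → ℝ) :
    z ⬝ᵥ ((∑ l, ω l • G l) *ᵥ z) = ∑ l, ω l * (z ⬝ᵥ (G l *ᵥ z)) := by
  have h1 : ∀ i, ((∑ l, ω l • G l) *ᵥ z) i = ∑ l, ω l * ((G l *ᵥ z) i) := by
    intro i
    simp only [Matrix.mulVec, dotProduct, Finset.sum_apply, Matrix.sum_apply,
      Matrix.smul_apply, Pi.smul_apply, smul_eq_mul, Finset.sum_mul, Finset.mul_sum]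
    rw [Finset.sum_comm]
    exact Finset.sum_congr rfl fun l _ => Finset.sum_congr rfl fun j _ => by ring
  simp only [dotProduct, h1, Finset.mul_sum]
  rw [Finset.sum_comm]
  exact Finset.sum_congr rfl fun l _ => Finset.sum_congr rfl fun i _ => by ring

lemma gammaFam_quad (P : Setup T nx N m) (ub : Seq T N m)
    (S : Fin N → Matrix (Jx nx) (Jx nx) ℝ) (k : ℕ)
    (D : Fin N → Matrix (ZIdx nx N m) (ZIdx nx N m) ℝ) (n : Fin N)
    (δx : Stt nx) (δu : Inp N m) :
    vec1 δx δu ⬝ᵥ (gammaFam P ub S k D n *ᵥ vec1 δx δu)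
      = vec1 δx δu ⬝ᵥ (Mmat P ub n k *ᵥ vec1 δx δu)
        + vecj (Amat P ub k *ᵥ δx + Bmat P ub k *ᵥ δu) ⬝ᵥ
            (S n *ᵥ vecj (Amat P ub k *ᵥ δx + Bmat P ub k *ᵥ δu))
        + Sum.elim δx δu ⬝ᵥ (D n *ᵥ Sum.elim δx δu) := by
  unfold gammaFam
  rw [Matrix.add_mulVec, Matrix.add_mulVec, dotProduct_add, dotProduct_add, quad_conj,
    cmat_mulVec, dext_quad]

lemma subPolicy_quad (Γ : Fin N → Matrix (Ix nx N m) (Ix nx N m) ℝ) (n : Fin N) (δx : Stt nx) :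
    vecj δx ⬝ᵥ (subPolicy Γ n *ᵥ vecj δx)
      = vec1 δx (Kof Γ *ᵥ δx + sof Γ) ⬝ᵥ (Γ n *ᵥ vec1 δx (Kof Γ *ᵥ δx + sof Γ)) := by
  unfold subPolicy
  rw [quad_conj, emat_mulVec]

lemma omega_dot (P : Setup T nx N m) (ub : Seq T N m) (n : Fin N) (j : ℕ) (Δx : Stt nx) :
    omegaAux P ub n (j+1) ⬝ᵥ Δx
      = M1x P ub n (T-j) ⬝ᵥ Δx + omegaAux P ub n j ⬝ᵥ (Amat P ub (T-j) *ᵥ Δx) := by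
  show (M1x P ub n (T-j) + omegaAux P ub n j ᵥ* Amat P ub (T-j)) ⬝ᵥ Δx = _
  rw [add_dotProduct, Matrix.dotProduct_mulVec]

lemma vaux_eq (P : Setup T nx N m) (ub : Seq T N m) :
    ∀ j, j ≤ T + 1 → ∀ (n : Fin N) (δx Δx : Stt nx),
      newtVAux P ub j n δx Δx
        = (1/2) * (vecj δx ⬝ᵥ (newtSAux P ub j n *ᵥ vecj δx) + omegaAux P ub n j ⬝ᵥ Δx) := by
  intro j
  induction j with
  | zero => intro _ n δx Δx; simp [newtVAux, newtSAux, omegaAux]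
  | succ j ih =>
    intro hj n δx Δx
    have hjT : j ≤ T := by omega
    have h2 : T + 1 - (T - j + 1) = j := by omega
    have hGam : newtGamma P ub (T - j)
        = gammaFam P ub (newtSAux P ub j) (T - j)
            (fun n => ∑ l, omegaAux P ub n j l • Gmat P ub (T - j) l) := by
      have hD : newtD P ub (T - j) = fun n => ∑ l, omegaAux P ub n j l • Gmat P ub (T - j) l := by
        funext n'
        simp only [newtD, Omega, h2]
      simp only [newtGamma, Nat.sub_sub_self hjT, hD]
    have hRq : omegaAux P ub n j ⬝ᵥ Rquad P ub (T - j) δx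
          (newtK P ub (T - j) *ᵥ δx + newts P ub (T - j))
        = Sum.elim δx (newtK P ub (T - j) *ᵥ δx + newts P ub (T - j)) ⬝ᵥ
            ((∑ l, omegaAux P ub n j l • Gmat P ub (T - j) l) *ᵥ
              Sum.elim δx (newtK P ub (T - j) *ᵥ δx + newts P ub (T - j))) := by
      rw [sum_smul_quad]
      simp [dotProduct, Rquad]
    show (1/2) * (vec1 δx _ ⬝ᵥ (Mmat P ub n (T - j) *ᵥ vec1 δx _) + M1x P ub n (T - j) ⬝ᵥ Δx)
        + newtVAux P ub j n _ _
      = (1/2) * (vecj δx ⬝ᵥ (subPolicy (gammaFam P ub (newtSAux P ub j) (T - j)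
          (fun n => ∑ l, omegaAux P ub n j l • Gmat P ub (T - j) l)) n *ᵥ vecj δx)
        + omegaAux P ub n (j+1) ⬝ᵥ Δx)
    have hK : Kof (newtGamma P ub (T - j)) = newtK P ub (T - j) := rfl
    have hs : sof (newtGamma P ub (T - j)) = newts P ub (T - j) := rfl
    rw [ih (by omega) n, ← hGam, subPolicy_quad, hGam, gammaFam_quad, ← hGam, hK, hs,
      omega_dot, dotProduct_add, hRq]
    ring

lemma q_eq (P : Setup T nx N m) (ub : Seq T N m) (k : ℕ) (hk : k ≤ T) (n : Fin N)
    (δx Δx : Stt nx) (δu : Inp N m) :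
    newtQ P ub k n δx Δx δu
      = (1/2) * (vec1 δx δu ⬝ᵥ (newtGamma P ub k n *ᵥ vec1 δx δu) + Omega P ub n k ⬝ᵥ Δx) := by
  have h1 : T + 1 - k = (T - k) + 1 := by omega
  have h2 : T + 1 - (k + 1) = T - k := by omega
  have hD : Sum.elim δx δu ⬝ᵥ (newtD P ub k n *ᵥ Sum.elim δx δu)
      = omegaAux P ub n (T - k) ⬝ᵥ Rquad P ub k δx δu := by
    simp only [newtD, Omega, h2]
    rw [sum_smul_quad]
    simp [dotProduct, Rquad]
  have hΩ : Omega P ub n k ⬝ᵥ Δx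
      = M1x P ub n k ⬝ᵥ Δx + omegaAux P ub n (T - k) ⬝ᵥ (Amat P ub k *ᵥ Δx) := by
    have := omega_dot P ub n (T - k) Δx
    rw [Nat.sub_sub_self hk] at this
    simp only [Omega, h1, this]
  show (1/2) * (vec1 δx δu ⬝ᵥ (Mmat P ub n k *ᵥ vec1 δx δu) + M1x P ub n k ⬝ᵥ Δx)
      + newtVAux P ub (T - k) n (Amat P ub k *ᵥ δx + Bmat P ub k *ᵥ δu)
          (Amat P ub k *ᵥ Δx + Rquad P ub k δx δu) = _
  rw [vaux_eq P ub (T - k) (by omega), hΩ]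
  show _ = (1/2) * (vec1 δx δu ⬝ᵥ (gammaFam P ub (newtSAux P ub (T - k)) k (newtD P ub k) n
      *ᵥ vec1 δx δu) + _)
  rw [gammaFam_quad, hD, dotProduct_add]
  ring

lemma v_eq (P : Setup T nx N m) (ub : Seq T N m) (k : ℕ) (n : Fin N) (δx Δx : Stt nx) :
    newtV P ub k n δx Δx
      = (1/2) * (vecj δx ⬝ᵥ (newtSmat P ub k n *ᵥ vecj δx) + Omega P ub n k ⬝ᵥ Δx) :=
  vaux_eq P ub (T + 1 - k) (by omega) n δx Δx

lemma dext_transpose (D : Matrix (ZIdx nx N m) (ZIdx nx N m) ℝ) :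
    (Dext D)ᵀ = Dext Dᵀ := by
  ext a b
  rcases a with u | w <;> rcases b with u' | w' <;> rfl

lemma Mmat_symm (P : Setup T nx N m) (ub : Seq T N m) (n : Fin N) (k : ℕ) (hk : k ≤ T)
    (hc : ∀ n : Fin N, ∀ k ≤ T, ContDiff ℝ 2 (cpair P n k)) :
    (Mmat P ub n k)ᵀ = Mmat P ub n k := by
  ext a b
  rw [Matrix.transpose_apply]
  rcases a with u | w <;> rcases b with u' | w'
  · rfl
  · rfl
  · rfl
  · exact sndSymm (hc n k hk) (zbar P ub k) (zbasis w') (zbasis w)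

lemma Gmat_symm (P : Setup T nx N m) (ub : Seq T N m) (k : ℕ) (hk : k ≤ T)
    (hf : ∀ k ≤ T, ContDiff ℝ 2 (fpair P k)) (l : Fin nx) :
    (Gmat P ub k l)ᵀ = Gmat P ub k l := by
  ext a b
  rw [Matrix.transpose_apply]
  exact sndSymm (contDiff_pi.1 (hf k hk) l) (zbar P ub k) (zbasis b) (zbasis a)

lemma gammaFam_symm (P : Setup T nx N m) (ub : Seq T N m)
    (S : Fin N → Matrix (Jx nx) (Jx nx) ℝ) (k : ℕ) (hk : k ≤ T)
    (D : Fin N → Matrix (ZIdx nx N m) (ZIdx nx N m) ℝ) (n : Fin N)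
    (hc : ∀ n : Fin N, ∀ k ≤ T, ContDiff ℝ 2 (cpair P n k))
    (hS : (S n)ᵀ = S n) (hD : (D n)ᵀ = D n) :
    (gammaFam P ub S k D n)ᵀ = gammaFam P ub S k D n := by
  unfold gammaFam
  rw [Matrix.transpose_add, Matrix.transpose_add, Mmat_symm P ub n k hk hc, dext_transpose, hD,
    Matrix.transpose_mul, Matrix.transpose_mul, Matrix.transpose_transpose, hS, Matrix.mul_assoc]

lemma newtSAux_symm (P : Setup T nx N m) (ub : Seq T N m)
    (hc : ∀ n : Fin N, ∀ k ≤ T, ContDiff ℝ 2 (cpair P n k))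
    (hf : ∀ k ≤ T, ContDiff ℝ 2 (fpair P k)) :
    ∀ j, ∀ n : Fin N, (newtSAux P ub j n)ᵀ = newtSAux P ub j n := by
  intro j
  induction j with
  | zero => intro n; simp [newtSAux]
  | succ j ih =>
    intro n
    show (subPolicy _ n)ᵀ = subPolicy _ n
    unfold subPolicy
    rw [Matrix.transpose_mul, Matrix.transpose_mul, Matrix.transpose_transpose,
      gammaFam_symm P ub _ _ (Nat.sub_le T j) _ n hc (ih n) ?_, Matrix.mul_assoc]
    rw [Matrix.transpose_sum]
    refine Finset.sum_congr rfl fun l _ => ?_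
    rw [Matrix.transpose_smul, Gmat_symm P ub _ (Nat.sub_le T j) hf l]

lemma newtGamma_symm (P : Setup T nx N m) (ub : Seq T N m) (k : ℕ) (hk : k ≤ T)
    (hc : ∀ n : Fin N, ∀ k ≤ T, ContDiff ℝ 2 (cpair P n k))
    (hf : ∀ k ≤ T, ContDiff ℝ 2 (fpair P k)) (n : Fin N) :
    (newtGamma P ub k n)ᵀ = newtGamma P ub k n := by
  unfold newtGamma
  refine gammaFam_symm P ub _ _ hk _ n hc (newtSAux_symm P ub hc hf _ n) ?_
  unfold newtD
  rw [Matrix.transpose_sum]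
  refine Finset.sum_congr rfl fun l _ => ?_
  rw [Matrix.transpose_smul, Gmat_symm P ub k hk hf l]

/-- derivative of the coordinate functions `w ↦ vec1 δx w a` -/
def coordD (a : Ix nx N m) : Inp N m →L[ℝ] ℝ :=
  match a with
  | Sum.inl _ => 0
  | Sum.inr (Sum.inl _) => 0
  | Sum.inr (Sum.inr q) => ContinuousLinearMap.proj q

lemma hasFDerivAt_vec1coord (δx : Stt nx) (δu : Inp N m) (a : Ix nx N m) :
    HasFDerivAt (fun w : Inp N m => vec1 δx w a) (coordD a) δu := by
  rcases a with u | (i | q)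
  · exact hasFDerivAt_const (1 : ℝ) δu
  · exact hasFDerivAt_const (δx i) δu
  · exact (ContinuousLinearMap.proj q : Inp N m →L[ℝ] ℝ).hasFDerivAt

lemma coordD_single (p : UIdx N m) (a : Ix nx N m) :
    coordD a (Pi.single p (1:ℝ))
      = Sum.elim (fun _ => (0:ℝ)) (Sum.elim (fun _ => (0:ℝ)) (Pi.single p (1:ℝ))) a := by
  rcases a with u | (i | q) <;> rfl

lemma quad_fderiv (Γ : Matrix (Ix nx N m) (Ix nx N m) ℝ) (hΓ : Γᵀ = Γ) (δx : Stt nx) (c : ℝ)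
    (δu : Inp N m) (p : UIdx N m) :
    fderiv ℝ (fun w : Inp N m => (1/2) * (vec1 δx w ⬝ᵥ (Γ *ᵥ vec1 δx w) + c)) δu
        (Pi.single p 1)
      = (Γ *ᵥ vec1 δx δu) (Sum.inr (Sum.inr p)) := by
  have hterm : ∀ a b : Ix nx N m, HasFDerivAt
      (fun w : Inp N m => vec1 δx w a * (Γ a b * vec1 δx w b))
      (vec1 δx δu a • (Γ a b • coordD b) + (Γ a b * vec1 δx δu b) • coordD a) δu :=
    fun a b => (hasFDerivAt_vec1coord δx δu a).mul
      ((hasFDerivAt_vec1coord δx δu b).const_mul (Γ a b))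
  have hsum : HasFDerivAt (fun w : Inp N m => ∑ a, ∑ b, vec1 δx w a * (Γ a b * vec1 δx w b))
      (∑ a, ∑ b, (vec1 δx δu a • (Γ a b • coordD b) + (Γ a b * vec1 δx δu b) • coordD a)) δu :=
    HasFDerivAt.fun_sum fun a _ => HasFDerivAt.fun_sum fun b _ => hterm a b
  have hfun : (fun w : Inp N m => (1/2) * (vec1 δx w ⬝ᵥ (Γ *ᵥ vec1 δx w) + c))
      = fun w => (1/2) * ((∑ a, ∑ b, vec1 δx w a * (Γ a b * vec1 δx w b)) + c) := by
    funext w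
    simp only [dotProduct, Matrix.mulVec, Finset.mul_sum]
  set e : Ix nx N m → ℝ := Sum.elim (fun _ => (0:ℝ)) (Sum.elim (fun _ => (0:ℝ))
    (Pi.single p (1:ℝ))) with he
  have heval : (∑ a, ∑ b, (vec1 δx δu a • (Γ a b • coordD b)
        + (Γ a b * vec1 δx δu b) • coordD a)) (Pi.single p 1)
      = vec1 δx δu ⬝ᵥ (Γ *ᵥ e) + e ⬝ᵥ (Γ *ᵥ vec1 δx δu) := by
    simp only [ContinuousLinearMap.sum_apply, ContinuousLinearMap.add_apply,
      ContinuousLinearMap.smul_apply, coordD_single, ← he, smul_eq_mul]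
    simp only [Finset.sum_add_distrib, dotProduct, Matrix.mulVec, Finset.mul_sum]
    congr 1
    exact Finset.sum_congr rfl fun a _ => Finset.sum_congr rfl fun b _ => by ring
  have hsymdot : vec1 δx δu ⬝ᵥ (Γ *ᵥ e) = e ⬝ᵥ (Γ *ᵥ vec1 δx δu) := by
    simp only [dotProduct, Matrix.mulVec, Finset.mul_sum]
    rw [Finset.sum_comm]
    refine Finset.sum_congr rfl fun b _ => Finset.sum_congr rfl fun a _ => ?_
    have hba : Γ a b = Γ b a := by conv_rhs => rw [← hΓ, Matrix.transpose_apply]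
    rw [hba]; ring
  have hedot : ∀ w : Ix nx N m → ℝ, e ⬝ᵥ w = w (Sum.inr (Sum.inr p)) := by
    intro w
    simp [he, dotProduct, Fintype.sum_sum_type, Pi.single_apply, ite_mul]
  rw [hfun, ((hsum.add_const c).const_mul (1/2)).fderiv]
  simp only [ContinuousLinearMap.smul_apply, smul_eq_mul]
  rw [heval, hsymdot, hedot]
  ring

lemma row_expand (Γ : Fin N → Matrix (Ix nx N m) (Ix nx N m) ℝ) (δx : Stt nx) (δu : Inp N m)
    (p : UIdx N m) :
    (Γ p.1 *ᵥ vec1 δx δu) (Sum.inr (Sum.inr p))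
      = Hof Γ p + (Pof Γ *ᵥ δx) p + (Fof Γ *ᵥ δu) p := by
  simp [Matrix.mulVec, dotProduct, Fintype.sum_sum_type, vec1, Hof, Pof, Fof, add_assoc]

end Aux11

/-- the Bellman functions of the Newton dynamic game are the quadratic forms
given by Γ_{n,k}, S_{n,k}, Ω_{n,k}, and for every (δx, Δx) the input δu = K_k δx + s_k is the
unique joint stationary point of the stage-k static game. -/
theorem statement11 (T nx N : ℕ) (m : Fin N → ℕ) (hnx : 1 ≤ nx) (P : Setup T nx N m)
    (hf : ∀ k ≤ T, ContDiff ℝ 2 (fpair P k))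
    (hc : ∀ n : Fin N, ∀ k ≤ T, ContDiff ℝ 2 (cpair P n k))
    (ub : Seq T N m)
    (hFinv : ∀ k ≤ T, IsUnit (newtF P ub k)) :
    ∀ k ≤ T,
      (∀ (n : Fin N) (δx Δx : Stt nx) (δu : Inp N m),
        newtQ P ub k n δx Δx δu
          = (1 / 2) * (vec1 δx δu ⬝ᵥ (newtGamma P ub k n *ᵥ vec1 δx δu)
              + Omega P ub n k ⬝ᵥ Δx)) ∧
      (∀ (n : Fin N) (δx Δx : Stt nx),
        newtV P ub k n δx Δx
          = (1 / 2) * (vecj δx ⬝ᵥ (newtSmat P ub k n *ᵥ vecj δx)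
              + Omega P ub n k ⬝ᵥ Δx)) ∧
      (∀ (δx Δx : Stt nx) (δu : Inp N m),
        (∀ p : UIdx N m,
          fderiv ℝ (fun w => newtQ P ub k p.1 δx Δx w) δu (Pi.single p 1) = 0) ↔
          δu = newtK P ub k *ᵥ δx + newts P ub k) := by
  intro k hk
  set Γn := newtGamma P ub k with hGn
  have hdet : IsUnit (Fof Γn).det := (Matrix.isUnit_iff_isUnit_det _).1 (hFinv k hk)
  refine ⟨q_eq P ub k hk, fun n δx Δx => v_eq P ub k n δx Δx, ?_⟩
  intro δx Δx δu
  have hsym : ∀ n, (Γn n)ᵀ = Γn n := fun n => newtGamma_symm P ub k hk hc hf n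
  have hfd : ∀ p : UIdx N m, fderiv ℝ (fun w => newtQ P ub k p.1 δx Δx w) δu (Pi.single p 1)
      = Hof Γn p + (Pof Γn *ᵥ δx) p + (Fof Γn *ᵥ δu) p := by
    intro p
    have hq : (fun w => newtQ P ub k p.1 δx Δx w)
        = fun w => (1/2) * (vec1 δx w ⬝ᵥ (Γn p.1 *ᵥ vec1 δx w)
            + Omega P ub p.1 k ⬝ᵥ Δx) := funext fun w => q_eq P ub k hk p.1 δx Δx w
    rw [hq, quad_fderiv _ (hsym p.1), row_expand]
  have hKs : newtK P ub k *ᵥ δx + newts P ub k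
      = -((Fof Γn)⁻¹ *ᵥ (Pof Γn *ᵥ δx + Hof Γn)) := by
    show Kof Γn *ᵥ δx + sof Γn = _
    unfold Kof sof
    rw [Matrix.neg_mulVec, Matrix.mulVec_add, ← Matrix.mulVec_mulVec]
    abel
  constructor
  · intro h
    have hF : Fof Γn *ᵥ δu = -(Pof Γn *ᵥ δx + Hof Γn) := by
      funext p
      have h2 := h p
      rw [hfd p] at h2
      simp only [Pi.neg_apply, Pi.add_apply]
      linarith
    have hinv : (Fof Γn)⁻¹ *ᵥ (Fof Γn *ᵥ δu) = δu := by
      rw [Matrix.mulVec_mulVec, Matrix.nonsing_inv_mul _ hdet, Matrix.one_mulVec]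
    calc δu = (Fof Γn)⁻¹ *ᵥ (Fof Γn *ᵥ δu) := hinv.symm
      _ = (Fof Γn)⁻¹ *ᵥ (-(Pof Γn *ᵥ δx + Hof Γn)) := by rw [hF]
      _ = -((Fof Γn)⁻¹ *ᵥ (Pof Γn *ᵥ δx + Hof Γn)) := by rw [Matrix.mulVec_neg]
      _ = newtK P ub k *ᵥ δx + newts P ub k := hKs.symm
  · intro h p
    rw [hfd p, h, hKs]
    have hFv : Fof Γn *ᵥ (-((Fof Γn)⁻¹ *ᵥ (Pof Γn *ᵥ δx + Hof Γn)))
        = -(Pof Γn *ᵥ δx + Hof Γn) := by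
      rw [Matrix.mulVec_neg, Matrix.mulVec_mulVec, Matrix.mul_nonsing_inv _ hdet,
        Matrix.one_mulVec]
    rw [hFv]
    simp only [Pi.neg_apply, Pi.add_apply]
    ring

end DynGame
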